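/- Let G be a d-regular graph and ab an edge that is not a cut-edge, and let G' = G minus the edge ab. Then the simple random walks on G' satisfy E_a T_b^{G'} = E_b T_a^{G'} provided E_a T_b = E_b T_a on G. -/

import Mathlib

open Finset

section Defs

variable {V : Type*} [Fintype V]

/-- Total conductance at a vertex. -/
noncomputable def condAt (c : V → V → ℝ) (x : V) : ℝ := ∑ y, c x y

/-- Transition probabilities of the random walk induced by conductances `c`. -/
noncomputable def step (c : V → V → ℝ) (x y : V) : ℝ := c x y / condAt c x

open scoped Classical in
/-- `surv P b n a` is the probability that the walk with transition matrix `P`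
started at `a` has not visited `b` by time `n`. -/
noncomputable def surv (P : V → V → ℝ) (b : V) : ℕ → V → ℝ
  | 0 => fun a => if a = b then 0 else 1
  | n + 1 => fun a => if a = b then 0 else ∑ y, P a y * surv P b n y

/-- Expected hitting time of `b` starting from `a`, as the sum over `n` of the
survival probabilities `P(T_b > n)`. -/
noncomputable def hitTime (P : V → V → ℝ) (a b : V) : ℝ := ∑' n, surv P b n a

/-- Expected return time to `z` : one step plus the expected hitting time of `z`
from the position after the first step. -/
noncomputable def returnTime (P : V → V → ℝ) (z : V) : ℝ :=
  1 + ∑ y, P z y * hitTime P y z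

/-- Dirichlet energy of a potential `f` for conductances `c`. -/
noncomputable def energy (c : V → V → ℝ) (f : V → ℝ) : ℝ :=
  (1 / 2) * ∑ x, ∑ y, c x y * (f x - f y) ^ 2

/-- Effective resistance between `a` and `b` (Dirichlet principle): the
reciprocal of the minimal Dirichlet energy among potentials with
`f a = 1`, `f b = 0`. -/
noncomputable def effRes (c : V → V → ℝ) (a b : V) : ℝ :=
  1 / sInf {E : ℝ | ∃ f : V → ℝ, f a = 1 ∧ f b = 0 ∧ E = energy c f}

end Defs

open scoped Classical in
/-- Unit conductances on the edges of a simple graph. -/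
noncomputable def gw {V : Type*} (G : SimpleGraph V) (x y : V) : ℝ :=
  if G.Adj x y then 1 else 0

/-- Number of edges of a simple graph. -/
noncomputable def numEdges {V : Type*} (G : SimpleGraph V) : ℕ := G.edgeSet.ncard

set_option linter.unusedSectionVars false
set_option linter.unusedVariables false
set_option maxHeartbeats 1000000
section Walk

variable {V : Type*} [Fintype V] [DecidableEq V]
variable {P : V → V → ℝ} {t : V}

lemma surv_self (n : ℕ) : surv P t n t = 0 := by cases n <;> simp [surv]

lemma surv_of_ne {x : V} (hx : x ≠ t) (n : ℕ) :
    surv P t (n + 1) x = ∑ y, P x y * surv P t n y := by simp [surv, hx]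

lemma surv_zero_of_ne {x : V} (hx : x ≠ t) : surv P t 0 x = 1 := by simp [surv, hx]

variable (hP0 : ∀ x y, 0 ≤ P x y) (hP1 : ∀ x, ∑ y, P x y = 1)

include hP0 in
lemma surv_nonneg (n : ℕ) (x : V) : 0 ≤ surv P t n x := by
  induction n generalizing x with
  | zero => by_cases hx : x = t <;> simp [surv, hx]
  | succ n ih =>
    by_cases hx : x = t
    · simp [hx, surv_self]
    · rw [surv_of_ne hx]
      exact Finset.sum_nonneg fun y _ => mul_nonneg (hP0 x y) (ih y)

include hP0 hP1 in
lemma surv_le_one (n : ℕ) (x : V) : surv P t n x ≤ 1 := by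
  induction n generalizing x with
  | zero => by_cases hx : x = t <;> simp [surv, hx]
  | succ n ih =>
    by_cases hx : x = t
    · simp [hx, surv_self]
    · rw [surv_of_ne hx]
      calc ∑ y, P x y * surv P t n y ≤ ∑ y, P x y * 1 := by
            refine Finset.sum_le_sum fun y _ => ?_
            exact mul_le_mul_of_nonneg_left (ih y) (hP0 x y)
        _ = 1 := by simp [hP1 x]

include hP0 hP1 in
lemma surv_succ_le (n : ℕ) (x : V) : surv P t (n + 1) x ≤ surv P t n x := by
  induction n generalizing x with
  | zero =>
    by_cases hx : x = t
    · simp [hx, surv_self]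
    · rw [surv_of_ne hx, surv_zero_of_ne hx]
      calc ∑ y, P x y * surv P t 0 y ≤ ∑ y, P x y * 1 := by
            refine Finset.sum_le_sum fun y _ => ?_
            exact mul_le_mul_of_nonneg_left (surv_le_one hP0 hP1 0 y) (hP0 x y)
        _ = 1 := by simp [hP1 x]
  | succ n ih =>
    by_cases hx : x = t
    · simp [hx, surv_self]
    · rw [surv_of_ne hx, surv_of_ne hx]
      exact Finset.sum_le_sum fun y _ => mul_le_mul_of_nonneg_left (ih y) (hP0 x y)

include hP0 hP1 in
lemma surv_le_of_le {m n : ℕ} (h : m ≤ n) (x : V) : surv P t n x ≤ surv P t m x := by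
  induction n with
  | zero => simp_all
  | succ n ih =>
    rcases Nat.eq_or_lt_of_le h with rfl | h'
    · exact le_refl _
    · exact (surv_succ_le hP0 hP1 n x).trans (ih (Nat.lt_succ_iff.mp h'))

include hP0 in
lemma surv_add_le {N : ℕ} {ρ : ℝ} (hρ : 0 ≤ ρ) (hN : ∀ x, surv P t N x ≤ ρ)
    (m : ℕ) (x : V) : surv P t (N + m) x ≤ ρ * surv P t m x := by
  induction m generalizing x with
  | zero =>
    by_cases hx : x = t
    · simp [hx, surv_self]
    · simpa [surv_zero_of_ne hx] using hN x
  | succ m ih =>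
    by_cases hx : x = t
    · simp [hx, surv_self]
    · rw [show N + (m+1) = (N + m) + 1 by ring, surv_of_ne hx, surv_of_ne hx,
        Finset.mul_sum]
      refine Finset.sum_le_sum fun y _ => ?_
      calc P x y * surv P t (N + m) y ≤ P x y * (ρ * surv P t m y) :=
            mul_le_mul_of_nonneg_left (ih y) (hP0 x y)
        _ = ρ * (P x y * surv P t m y) := by ring

include hP0 in
lemma surv_mul_le {N : ℕ} {ρ : ℝ} (hρ : 0 ≤ ρ) (hN : ∀ x, surv P t N x ≤ ρ)
    (k : ℕ) (x : V) : surv P t (N * k) x ≤ ρ ^ k := by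
  induction k generalizing x with
  | zero =>
    by_cases hx : x = t
    · simp [hx, surv_self]
    · simp [surv_zero_of_ne hx]
  | succ k ih =>
    have : N * (k + 1) = N + N * k := by ring
    rw [this, pow_succ']
    calc surv P t (N + N * k) x ≤ ρ * surv P t (N * k) x := surv_add_le hP0 hρ hN _ x
      _ ≤ ρ * ρ ^ k := mul_le_mul_of_nonneg_left (ih x) hρ

include hP0 hP1 in
lemma summable_surv {N : ℕ} {ρ : ℝ} (hNpos : 0 < N) (hρ0 : 0 ≤ ρ) (hρ1 : ρ < 1)
    (hN : ∀ x, surv P t N x ≤ ρ) (x : V) : Summable (fun n => surv P t n x) := by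
  have key : ∀ n, surv P t n x ≤ ρ ^ (n / N) := by
    intro n
    calc surv P t n x ≤ surv P t (N * (n / N)) x :=
          surv_le_of_le hP0 hP1 (Nat.mul_div_le n N) x
      _ ≤ ρ ^ (n / N) := surv_mul_le hP0 hρ0 hN _ x
  refine summable_of_sum_range_le (c := N * (1 - ρ)⁻¹) (fun n => surv_nonneg hP0 n x) (fun n => ?_)
  have hmono : ∀ m n : ℕ, m ≤ n →
      ∑ i ∈ Finset.range m, ρ ^ (i / N) ≤ ∑ i ∈ Finset.range n, ρ ^ (i / N) := by
    intro m n h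
    exact Finset.sum_le_sum_of_subset_of_nonneg (Finset.range_subset_range.mpr h)
      (fun i _ _ => pow_nonneg hρ0 _)
  have hgroup : ∀ K : ℕ, ∑ i ∈ Finset.range (N * K), ρ ^ (i / N)
      = N * ∑ k ∈ Finset.range K, ρ ^ k := by
    intro K
    induction K with
    | zero => simp
    | succ K ih =>
      rw [Nat.mul_succ, Finset.sum_range_add, ih, Finset.sum_range_succ]
      have : ∀ i ∈ Finset.range N, ρ ^ ((N * K + i) / N) = ρ ^ K := by
        intro i hi
        rw [Finset.mem_range] at hi
        congr 1
        rw [Nat.mul_add_div hNpos, Nat.div_eq_of_lt hi, add_zero]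
      rw [Finset.sum_congr rfl this]
      simp
      ring
  calc ∑ i ∈ Finset.range n, surv P t i x ≤ ∑ i ∈ Finset.range n, ρ ^ (i / N) :=
        Finset.sum_le_sum fun i _ => key i
    _ ≤ ∑ i ∈ Finset.range (N * n), ρ ^ (i / N) := hmono _ _ (Nat.le_mul_of_pos_left n hNpos)
    _ = N * ∑ k ∈ Finset.range n, ρ ^ k := hgroup n
    _ ≤ N * (1 - ρ)⁻¹ := by
        refine mul_le_mul_of_nonneg_left ?_ (by positivity)
        exact sum_le_hasSum _ (fun i _ => pow_nonneg hρ0 i)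
          (hasSum_geometric_of_lt_one hρ0 hρ1)

end Walk

section Graph

variable {V : Type*} [Fintype V] [DecidableEq V]

lemma gw_nonneg (Γ : SimpleGraph V) (x y : V) : 0 ≤ gw Γ x y := by
  by_cases h : Γ.Adj x y <;> simp [gw, h]

lemma gw_symm (Γ : SimpleGraph V) (x y : V) : gw Γ x y = gw Γ y x := by
  unfold gw; rw [SimpleGraph.adj_comm]

lemma gw_le_one (Γ : SimpleGraph V) (x y : V) : gw Γ x y ≤ 1 := by
  by_cases h : Γ.Adj x y <;> simp [gw, h]

variable {Γ : SimpleGraph V}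

lemma exists_adj (hΓ : Γ.Connected) [Nontrivial V] (x : V) : ∃ y, Γ.Adj x y := by
  obtain ⟨y, hy⟩ := exists_ne x
  obtain ⟨w⟩ := hΓ.preconnected x y
  cases w with
  | nil => exact absurd rfl hy
  | cons h p => exact ⟨_, h⟩

lemma one_le_condAt (hΓ : Γ.Connected) [Nontrivial V] (x : V) :
    1 ≤ condAt (gw Γ) x := by
  obtain ⟨y, hy⟩ := exists_adj hΓ x
  have h1 : gw Γ x y = 1 := by simp [gw, hy]
  calc (1:ℝ) = gw Γ x y := h1.symm
    _ ≤ ∑ z, gw Γ x z :=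
      Finset.single_le_sum (fun i _ => gw_nonneg Γ x i) (Finset.mem_univ y)

lemma condAt_pos (hΓ : Γ.Connected) [Nontrivial V] (x : V) : 0 < condAt (gw Γ) x :=
  lt_of_lt_of_le one_pos (one_le_condAt hΓ x)

lemma condAt_le_card (x : V) : condAt (gw Γ) x ≤ (Fintype.card V : ℝ) := by
  unfold condAt
  calc ∑ y, gw Γ x y ≤ ∑ _y : V, (1:ℝ) := Finset.sum_le_sum fun y _ => gw_le_one Γ x y
    _ = (Fintype.card V : ℝ) := by simp

lemma step_nonneg (hΓ : Γ.Connected) [Nontrivial V] (x y : V) :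
    0 ≤ step (gw Γ) x y :=
  div_nonneg (gw_nonneg Γ x y) (condAt_pos hΓ x).le

lemma step_row_sum (hΓ : Γ.Connected) [Nontrivial V] (x : V) :
    ∑ y, step (gw Γ) x y = 1 := by
  unfold step
  rw [← Finset.sum_div]
  exact div_self (condAt_pos hΓ x).ne'

lemma step_ge_of_adj (hΓ : Γ.Connected) [Nontrivial V] {x y : V} (h : Γ.Adj x y) :
    ((Fintype.card V : ℝ))⁻¹ ≤ step (gw Γ) x y := by
  unfold step
  have h1 : gw Γ x y = 1 := by simp [gw, h]
  rw [h1]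
  have hpos := condAt_pos hΓ x
  have hle := condAt_le_card (Γ := Γ) x
  calc ((Fintype.card V : ℝ))⁻¹ = 1 / (Fintype.card V : ℝ) := (one_div _).symm
    _ ≤ 1 / condAt (gw Γ) x := one_div_le_one_div_of_le hpos hle

end Graph

section Contraction

variable {V : Type*} [Fintype V] [DecidableEq V]
variable {Γ : SimpleGraph V}

lemma surv_dist_bound (hΓ : Γ.Connected) [Nontrivial V] (t : V) :
    ∀ n : ℕ, ∀ x : V, Γ.dist x t ≤ n →
      surv (step (gw Γ)) t n x ≤ 1 - ((Fintype.card V : ℝ))⁻¹ ^ n := by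
  set ε : ℝ := ((Fintype.card V : ℝ))⁻¹ with hε
  have hcard : (1:ℝ) ≤ (Fintype.card V : ℝ) := by
    exact_mod_cast Nat.one_le_iff_ne_zero.mpr Fintype.card_ne_zero
  have hε0 : 0 < ε := by positivity
  have hε1 : ε ≤ 1 := by
    rw [hε]
    exact inv_le_one_of_one_le₀ hcard
  intro n
  induction n with
  | zero =>
    intro x hx
    have : x = t := (hΓ.dist_eq_zero_iff).mp (Nat.le_zero.mp hx)
    simp [this, surv_self]
  | succ n ih =>
    intro x hx
    by_cases hxt : x = t
    · subst hxt
      rw [surv_self]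
      have : ε ^ (n+1) ≤ 1 := pow_le_one₀ hε0.le hε1
      linarith
    · -- there is a neighbor y with dist y t ≤ n
      have hd0 : Γ.dist x t ≠ 0 := by
        intro h0
        exact hxt ((hΓ.dist_eq_zero_iff).mp h0)
      obtain ⟨y, hadj, p, hplen⟩ :
          ∃ y, Γ.Adj x y ∧ ∃ p : Γ.Walk y t, p.length + 1 = Γ.dist x t := by
        obtain ⟨w, hw⟩ := (hΓ.preconnected x t).exists_walk_length_eq_dist
        obtain ⟨y, h, q, hq⟩ := SimpleGraph.Walk.exists_eq_cons_of_ne hxt w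
        refine ⟨y, h, q, ?_⟩
        rw [← hw, hq]
        simp
      have hydist : Γ.dist y t ≤ n := by
        have h1 : Γ.dist y t ≤ p.length := SimpleGraph.dist_le p
        omega
      have hstep := step_ge_of_adj hΓ hadj
      have hsle : ∀ z, surv (step (gw Γ)) t n z ≤ 1 :=
        fun z => surv_le_one (step_nonneg hΓ) (step_row_sum hΓ) n z
      have hsnn : ∀ z, 0 ≤ surv (step (gw Γ)) t n z :=
        fun z => surv_nonneg (step_nonneg hΓ) n z
      rw [surv_of_ne hxt]
      have key : ∑ z, step (gw Γ) x z * surv (step (gw Γ)) t n z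
          ≤ ∑ z, step (gw Γ) x z * (if z = y then 1 - ε ^ n else 1) := by
        refine Finset.sum_le_sum fun z _ => ?_
        refine mul_le_mul_of_nonneg_left ?_ (step_nonneg hΓ x z)
        by_cases hzy : z = y
        · subst hzy; simp only [if_pos rfl]; exact ih z hydist
        · simp only [if_neg hzy]; exact hsle z
      have expand : ∑ z, step (gw Γ) x z * (if z = y then 1 - ε ^ n else 1)
          = 1 - step (gw Γ) x y * ε ^ n := by
        have : ∀ z, step (gw Γ) x z * (if z = y then 1 - ε ^ n else 1)
            = step (gw Γ) x z - (if z = y then step (gw Γ) x z * ε ^ n else 0) := by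
          intro z; by_cases hzy : z = y <;> simp [hzy] <;> ring
        rw [Finset.sum_congr rfl (fun z _ => this z), Finset.sum_sub_distrib,
          step_row_sum hΓ, Finset.sum_ite_eq' Finset.univ y
            (fun z => step (gw Γ) x z * ε ^ n)]
        simp
      have final : 1 - step (gw Γ) x y * ε ^ n ≤ 1 - ε ^ (n + 1) := by
        have : ε ^ (n+1) = ε * ε ^ n := by ring
        rw [this]
        have := mul_le_mul_of_nonneg_right hstep (pow_nonneg hε0.le n)
        linarith
      calc ∑ z, step (gw Γ) x z * surv (step (gw Γ)) t n z
          ≤ 1 - step (gw Γ) x y * ε ^ n := key.trans (le_of_eq expand)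
        _ ≤ 1 - ε ^ (n+1) := final

lemma summable_surv_graph (hΓ : Γ.Connected) [Nontrivial V] (t x : V) :
    Summable (fun n => surv (step (gw Γ)) t n x) := by
  set N : ℕ := Fintype.card V with hN
  have hNpos : 0 < N := Fintype.card_pos
  set ε : ℝ := ((Fintype.card V : ℝ))⁻¹ with hε
  have hε0 : 0 < ε := by positivity
  have hε1 : ε ≤ 1 := by
    rw [hε]
    exact inv_le_one_of_one_le₀ (by exact_mod_cast Nat.one_le_iff_ne_zero.mpr Fintype.card_ne_zero)
  set ρ : ℝ := 1 - ε ^ N with hρ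
  have hρ0 : 0 ≤ ρ := by
    have : ε ^ N ≤ 1 := pow_le_one₀ hε0.le hε1
    simp [hρ]; linarith
  have hρ1 : ρ < 1 := by
    have : 0 < ε ^ N := pow_pos hε0 N
    simp [hρ]; linarith
  have hbound : ∀ z, surv (step (gw Γ)) t N z ≤ ρ := by
    intro z
    refine surv_dist_bound hΓ t N z ?_
    obtain ⟨p, hpath, hplen⟩ := hΓ.exists_path_of_dist z t
    have := hpath.length_lt
    omega
  exact summable_surv (step_nonneg hΓ) (step_row_sum hΓ) hNpos hρ0 hρ1 hbound x

lemma hitTime_self (P : V → V → ℝ) (t : V) : hitTime P t t = 0 := by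
  unfold hitTime
  have : ∀ n : ℕ, surv P t n t = 0 := fun n => surv_self n
  simp [this]

lemma hitTime_rec (hΓ : Γ.Connected) [Nontrivial V] {t x : V} (hx : x ≠ t) :
    hitTime (step (gw Γ)) x t
      = 1 + ∑ y, step (gw Γ) x y * hitTime (step (gw Γ)) y t := by
  set P := step (gw Γ) with hP
  unfold hitTime
  rw [Summable.tsum_eq_zero_add (summable_surv_graph hΓ t x)]
  congr 1
  · exact surv_zero_of_ne hx
  · have h1 : ∀ n : ℕ, surv P t (n + 1) x = ∑ y, P x y * surv P t n y :=
      fun n => surv_of_ne hx n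
    rw [tsum_congr h1]
    rw [Summable.tsum_finsetSum (fun y _ => (summable_surv_graph hΓ t y).mul_left (P x y))]
    exact Finset.sum_congr rfl fun y _ => tsum_mul_left

end Contraction

section Lap

variable {V : Type*} [Fintype V] [DecidableEq V]

/-- Graph Laplacian applied to a potential. -/
noncomputable def Lap (c : V → V → ℝ) (u : V → ℝ) (x : V) : ℝ :=
  condAt c x * u x - ∑ y, c x y * u y

lemma lap_eq_sum (c : V → V → ℝ) (u : V → ℝ) (x : V) :
    Lap c u x = ∑ y, c x y * (u x - u y) := by
  unfold Lap condAt
  rw [Finset.sum_mul] at *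
  rw [← Finset.sum_sub_distrib]
  congr 1
  ext y
  ring

lemma lap_add (c : V → V → ℝ) (u v : V → ℝ) (x : V) :
    Lap c (fun z => u z + v z) x = Lap c u x + Lap c v x := by
  simp only [lap_eq_sum]
  rw [← Finset.sum_add_distrib]
  congr 1; ext y; ring

lemma lap_sub (c : V → V → ℝ) (u v : V → ℝ) (x : V) :
    Lap c (fun z => u z - v z) x = Lap c u x - Lap c v x := by
  simp only [lap_eq_sum]
  rw [← Finset.sum_sub_distrib]
  congr 1; ext y; ring

lemma lap_total {c : V → V → ℝ} (hsymm : ∀ x y, c x y = c y x) (u : V → ℝ) :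
    ∑ x, Lap c u x = 0 := by
  simp only [lap_eq_sum]
  have h1 : ∑ x, ∑ y, c x y * (u x - u y)
      = ∑ x, ∑ y, c x y * u x - ∑ x, ∑ y, c x y * u y := by
    rw [← Finset.sum_sub_distrib]
    congr 1; ext x
    rw [← Finset.sum_sub_distrib]
    congr 1; ext y; ring
  rw [h1]
  have h2 : ∑ x, ∑ y, (c x y * u y) = ∑ x, ∑ y, (c x y * u x) := by
    rw [Finset.sum_comm]
    congr 1; ext y
    congr 1; ext x
    rw [hsymm]
  rw [h2, sub_self]

variable {Γ : SimpleGraph V}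

/-- The Laplacian of a hitting-time vector. -/
lemma lap_hit (hΓ : Γ.Connected) [Nontrivial V] (t : V) (x : V) :
    Lap (gw Γ) (fun z => hitTime (step (gw Γ)) z t) x
      = condAt (gw Γ) x - (if x = t then ∑ z, condAt (gw Γ) z else 0) := by
  have hoff : ∀ x : V, x ≠ t →
      Lap (gw Γ) (fun z => hitTime (step (gw Γ)) z t) x = condAt (gw Γ) x := by
    intro x hx
    unfold Lap
    dsimp only
    rw [hitTime_rec hΓ hx]
    have hpos := condAt_pos hΓ x
    have : condAt (gw Γ) x * (1 + ∑ y, step (gw Γ) x y * hitTime (step (gw Γ)) y t)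
        = condAt (gw Γ) x + ∑ y, gw Γ x y * hitTime (step (gw Γ)) y t := by
      rw [mul_add, mul_one, Finset.mul_sum]
      congr 1
      refine Finset.sum_congr rfl fun y _ => ?_
      unfold step
      field_simp
    rw [this]
    ring
  by_cases hx : x = t
  · subst hx
    have htot := lap_total (c := gw Γ) (fun x y => gw_symm Γ x y)
      (fun z => hitTime (step (gw Γ)) z x)
    have hsplit : ∑ z, Lap (gw Γ) (fun z => hitTime (step (gw Γ)) z x) z
        = Lap (gw Γ) (fun z => hitTime (step (gw Γ)) z x) x
          + ∑ z ∈ Finset.univ.erase x, condAt (gw Γ) z := by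
      rw [← Finset.add_sum_erase _ _ (Finset.mem_univ x)]
      congr 1
      exact Finset.sum_congr rfl fun z hz => hoff z (Finset.ne_of_mem_erase hz)
    rw [htot] at hsplit
    have herase : ∑ z ∈ Finset.univ.erase x, condAt (gw Γ) z
        = ∑ z, condAt (gw Γ) z - condAt (gw Γ) x := by
      rw [← Finset.add_sum_erase _ _ (Finset.mem_univ x)]
      ring
    rw [herase] at hsplit
    simp only [eq_self_iff_true, if_true]
    linarith
  · rw [hoff x hx, if_neg hx, sub_zero]

/-- Maximum principle: harmonic functions on a connected graph are constant. -/
lemma lap_const (hΓ : Γ.Connected) (u : V → ℝ)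
    (hu : ∀ x, Lap (gw Γ) u x = 0) (x y : V) : u x = u y := by
  have : Nonempty V := ⟨x⟩
  obtain ⟨x₀, -, hx₀⟩ := Finset.exists_max_image Finset.univ u ⟨x, Finset.mem_univ x⟩
  have hmax : ∀ z, u z ≤ u x₀ := fun z => hx₀ z (Finset.mem_univ z)
  have hadjstep : ∀ z w, Γ.Adj z w → u z = u x₀ → u w = u x₀ := by
    intro z w hzw hz
    have h0 : ∑ y, gw Γ z y * (u z - u y) = 0 := by
      rw [← lap_eq_sum]; exact hu z
    have hnn : ∀ y ∈ Finset.univ, 0 ≤ gw Γ z y * (u z - u y) := by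
      intro y _
      refine mul_nonneg (gw_nonneg Γ z y) ?_
      rw [hz]
      linarith [hmax y]
    have := (Finset.sum_eq_zero_iff_of_nonneg hnn).mp h0 w (Finset.mem_univ w)
    have hgw : gw Γ z w = 1 := by simp [gw, hzw]
    rw [hgw, one_mul, sub_eq_zero] at this
    rw [← this, hz]
  have hwalk : ∀ {z w : V} (_ : Γ.Walk z w), u z = u x₀ → u w = u x₀ := by
    intro z w p
    induction p with
    | nil => exact id
    | cons h q ih => exact fun hz => ih (hadjstep _ _ h hz)
  have hall : ∀ z, u z = u x₀ := by
    intro z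
    obtain ⟨p⟩ := hΓ.preconnected x₀ z
    exact hwalk p rfl
  rw [hall x, hall y]

end Lap

section Delete

variable {V : Type*} [Fintype V] [DecidableEq V]

lemma gw_delete (G : SimpleGraph V) {a b : V} (hab : G.Adj a b) (x y : V) :
    gw G x y = gw (G.deleteEdges {s(a,b)}) x y
      + (if (x = a ∧ y = b) ∨ (x = b ∧ y = a) then 1 else 0) := by
  unfold gw
  by_cases h : (x = a ∧ y = b) ∨ (x = b ∧ y = a)
  · have hxy : G.Adj x y := by
      rcases h with ⟨rfl, rfl⟩ | ⟨rfl, rfl⟩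
      · exact hab
      · exact hab.symm
    have hdel : ¬ (G.deleteEdges {s(a,b)}).Adj x y := by
      rw [SimpleGraph.deleteEdges_adj]
      push_neg
      intro _
      rw [Set.mem_singleton_iff, Sym2.eq_iff]
      exact h
    simp [hxy, hdel, h]
  · have hiff : (G.deleteEdges {s(a,b)}).Adj x y ↔ G.Adj x y := by
      rw [SimpleGraph.deleteEdges_adj]
      constructor
      · exact fun h' => h'.1
      · intro h'
        refine ⟨h', ?_⟩
        rw [Set.mem_singleton_iff, Sym2.eq_iff]
        exact h
    by_cases hxy : G.Adj x y <;> simp [hxy, hiff, h]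

lemma sum_ind_f {a b : V} (hne : a ≠ b) (x : V) (f : V → ℝ) :
    ∑ y, (if (x = a ∧ y = b) ∨ (x = b ∧ y = a) then (1:ℝ) else 0) * f y
      = (if x = a then f b else 0) + (if x = b then f a else 0) := by
  have key : ∀ y, (if (x = a ∧ y = b) ∨ (x = b ∧ y = a) then (1:ℝ) else 0) * f y
      = (if y = b then (if x = a then f y else 0) else 0)
        + (if y = a then (if x = b then f y else 0) else 0) := by
    intro y
    by_cases h1 : x = a <;> by_cases h2 : x = b <;> by_cases h3 : y = a <;>
      by_cases h4 : y = b <;> simp_all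
  rw [Finset.sum_congr rfl fun y _ => key y, Finset.sum_add_distrib,
    Finset.sum_ite_eq' Finset.univ b, Finset.sum_ite_eq' Finset.univ a]
  simp

lemma condAt_delete (G : SimpleGraph V) {a b : V} (hab : G.Adj a b) (x : V) :
    condAt (gw G) x = condAt (gw (G.deleteEdges {s(a,b)})) x
      + ((if x = a then 1 else 0) + (if x = b then 1 else 0)) := by
  have hne : a ≠ b := hab.ne
  unfold condAt
  rw [Finset.sum_congr rfl (fun y _ => gw_delete G hab x y), Finset.sum_add_distrib]
  congr 1
  have := sum_ind_f hne x (fun _ => (1:ℝ))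
  simpa using this

lemma lap_delete (G : SimpleGraph V) {a b : V} (hab : G.Adj a b) (u : V → ℝ) (x : V) :
    Lap (gw G) u x = Lap (gw (G.deleteEdges {s(a,b)})) u x
      + ((if x = a then u x - u b else 0) + (if x = b then u x - u a else 0)) := by
  have hne : a ≠ b := hab.ne
  simp only [lap_eq_sum]
  rw [Finset.sum_congr rfl (fun y _ => by rw [gw_delete G hab x y])]
  have expand : ∀ y, (gw (G.deleteEdges {s(a,b)}) x y
        + (if (x = a ∧ y = b) ∨ (x = b ∧ y = a) then (1:ℝ) else 0)) * (u x - u y)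
      = gw (G.deleteEdges {s(a,b)}) x y * (u x - u y)
        + (if (x = a ∧ y = b) ∨ (x = b ∧ y = a) then (1:ℝ) else 0) * (u x - u y) := by
    intro y; ring
  rw [Finset.sum_congr rfl (fun y _ => expand y), Finset.sum_add_distrib,
    sum_ind_f hne x (fun y => u x - u y)]

end Delete

theorem regular_delete_edge_symm' {V : Type*} [Fintype V] [DecidableEq V]
    (G : SimpleGraph V) [DecidableRel G.Adj] (hconn : G.Connected)
    (a b : V) (hab : G.Adj a b)
    (hcut : (G.deleteEdges {s(a, b)}).Connected)
    (hsym : hitTime (step (gw G)) a b = hitTime (step (gw G)) b a) :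
    hitTime (step (gw (G.deleteEdges {s(a, b)}))) a b
      = hitTime (step (gw (G.deleteEdges {s(a, b)}))) b a := by
  classical
  have hne : a ≠ b := hab.ne
  have hnt : Nontrivial V := ⟨a, b, hne⟩
  set G' := G.deleteEdges {s(a,b)} with hG'
  set P : V → V → ℝ := step (gw G) with hP
  set P' : V → V → ℝ := step (gw G') with hP'
  set hv : V → ℝ := fun z => hitTime P' z b with hhv
  set gv : V → ℝ := fun z => hitTime P' z a with hgv
  set Hv : V → ℝ := fun z => hitTime P z b with hHv
  set Gv : V → ℝ := fun z => hitTime P z a with hGv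
  set S : ℝ := ∑ z, condAt (gw G) z with hSdef
  set S' : ℝ := ∑ z, condAt (gw G') z with hS'def
  have hψab : Hv a + Gv a = Hv b + Gv b := by
    have h1 : Gv a = 0 := hitTime_self P a
    have h2 : Hv b = 0 := hitTime_self P b
    rw [h1, h2, add_zero, zero_add]
    exact hsym
  have hS : S = S' + 2 := by
    rw [hSdef, hS'def, Finset.sum_congr rfl (fun x _ => condAt_delete G hab x),
      Finset.sum_add_distrib, Finset.sum_add_distrib]
    simp [hne]
    norm_num
    rfl
  have lap_hv : ∀ x, Lap (gw G') hv x = condAt (gw G') x - (if x = b then S' else 0) :=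
    lap_hit hcut b
  have lap_gv : ∀ x, Lap (gw G') gv x = condAt (gw G') x - (if x = a then S' else 0) :=
    lap_hit hcut a
  have lap_Hv : ∀ x, Lap (gw G) Hv x = condAt (gw G) x - (if x = b then S else 0) :=
    lap_hit hconn b
  have lap_Gv : ∀ x, Lap (gw G) Gv x = condAt (gw G) x - (if x = a then S else 0) :=
    lap_hit hconn a
  set w : V → ℝ := fun z => (Hv z + Gv z) - (hv z + gv z) with hw
  have hlapw : ∀ x, Lap (gw G') w x = 0 := by
    intro x
    have l1 : Lap (gw G') w x
        = Lap (gw G') (fun z => Hv z + Gv z) x - Lap (gw G') (fun z => hv z + gv z) x :=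
      lap_sub (gw G') (fun z => Hv z + Gv z) (fun z => hv z + gv z) x
    have l2 : Lap (gw G') (fun z => Hv z + Gv z) x
        = Lap (gw G') Hv x + Lap (gw G') Gv x := lap_add (gw G') Hv Gv x
    have l3 : Lap (gw G') (fun z => hv z + gv z) x
        = Lap (gw G') hv x + Lap (gw G') gv x := lap_add (gw G') hv gv x
    have d1 := lap_delete G hab Hv x
    have d2 := lap_delete G hab Gv x
    have c1 := condAt_delete G hab x
    rw [lap_Hv x] at d1
    rw [lap_Gv x] at d2
    rw [l1, l2, l3, lap_hv x, lap_gv x]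
    by_cases hxa : x = a
    · subst hxa
      simp only [eq_self_iff_true, if_true, if_neg hne] at d1 d2 c1 ⊢
      linarith [hψab, hS]
    · by_cases hxb : x = b
      · subst hxb
        simp only [eq_self_iff_true, if_true, if_neg (Ne.symm hne), if_neg hxa] at d1 d2 c1 ⊢
        linarith [hψab, hS]
      · simp only [if_neg hxa, if_neg hxb] at d1 d2 c1 ⊢
        linarith
  have hkey := lap_const hcut w hlapw a b
  have hga : gv a = 0 := hitTime_self P' a
  have hhb : hv b = 0 := hitTime_self P' b
  have : hv a = gv b := by
    simp only [hw] at hkey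
    have := hψab
    linarith
  exact this

/-- If `G` is `d`-regular, `ab` is not a cut-edge and hitting times between `a`
and `b` are symmetric on `G`, then they remain symmetric after deleting the
edge `ab`. -/
theorem regular_delete_edge_symm {V : Type*} [Fintype V] [DecidableEq V]
    (G : SimpleGraph V) [DecidableRel G.Adj] (hconn : G.Connected)
    (d : ℕ) (hreg : G.IsRegularOfDegree d)
    (a b : V) (hab : G.Adj a b)
    (hcut : (G.deleteEdges {s(a, b)}).Connected)
    (hsym : hitTime (step (gw G)) a b = hitTime (step (gw G)) b a) :
    hitTime (step (gw (G.deleteEdges {s(a, b)}))) a b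
      = hitTime (step (gw (G.deleteEdges {s(a, b)}))) b a :=
  regular_delete_edge_symm' G hconn a b hab hcut hsym
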